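/- (Recovery from the loss of two information nodes) Let k ≥ 3 be odd and let j_0, j_1 ∈ {0,…,k−1} be distinct. If two information arrays a, a′ : {0,…,2^{k−1}−1} × {0,…,k−1} → GF(2) satisfy a_{i′,j′} = a′_{i′,j′} for all i′ and all j′ ∉ {j_0, j_1}, h_i(a) = h_i(a′) for all i, and b_i(a) = b_i(a′) for all i, then a = a′. (The information array is determined by the k−2 surviving information columns together with both parity nodes.) -/

import Mathlib

/-- The `j`-th bit of `i` (`j ≥ 0`). -/
def bitp (i j : ℕ) : Bool := i.testBit j

/-- The `(j-1)`-th bit of `i`, with the convention that the bit at position `-1` is `0`. -/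
def bitm (i j : ℕ) : Bool := if j = 0 then false else i.testBit (j - 1)

/-- `i` is dark in column `j` iff `i(j) = i(j-1)`. -/
def dark (i j : ℕ) : Prop := bitp i j = bitm i j

instance (i j : ℕ) : Decidable (dark i j) := by unfold dark; infer_instance

/-- `ℓ_{i,j} = i ⊕ (2^j - 1)`. -/
def ell (i j : ℕ) : ℕ := i ^^^ (2 ^ j - 1)

/-- The set `B_{i,j}`. -/
def Bset (k i j : ℕ) : Finset (ℕ × ℕ) :=
  if dark i j then
    ((Finset.range k).filter
        (fun j' : ℕ => ((j : ℤ) - (j' : ℤ)) % (k : ℤ) ≤ ((k / 2 : ℕ) : ℤ))).image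
      (fun j' => (i, j'))
  else {(i, j)}

/-- The butterfly support set `B_i = ⋃_{j ∈ [k]} B_{ℓ_{i,j}, j}`. -/
def Bline (k i : ℕ) : Finset (ℕ × ℕ) :=
  (Finset.range k).biUnion (fun j => Bset k (ell i j) j)

/-- Horizontal parity `h_i(a)`. -/
def hpar (k : ℕ) (a : ℕ → ℕ → ZMod 2) (i : ℕ) : ZMod 2 :=
  ∑ j ∈ Finset.range k, a i j

/-- Butterfly parity `b_i(a)`. -/
def bpar (k : ℕ) (a : ℕ → ℕ → ZMod 2) (i : ℕ) : ZMod 2 :=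
  ∑ p ∈ Bline k i, a p.1 p.2

/-- Key fact about how XOR-ing with a pair of masks `2^p-1`, `2^j-1` affects darkness. -/
lemma dark_toggle (r p j t : ℕ) :
    dark (r ^^^ (2 ^ p - 1) ^^^ (2 ^ j - 1)) t ↔ (dark r t ↔ ((t = p) ↔ (t = j))) := by
  unfold dark bitp bitm
  rcases Nat.eq_zero_or_pos t with ht | ht
  · subst ht
    simp only [if_pos rfl, Nat.testBit_xor, Nat.testBit_two_pow_sub_one]
    by_cases hp : 0 < p <;> by_cases hj : 0 < j <;>
      cases hb : r.testBit 0 <;>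
      simp [hp, hj, hb] <;> omega
  · rw [if_neg (by omega), if_neg (by omega)]
    simp only [Nat.testBit_xor, Nat.testBit_two_pow_sub_one]
    by_cases h1 : t < p <;> by_cases h2 : t - 1 < p <;>
    by_cases h3 : t < j <;> by_cases h4 : t - 1 < j <;>
      cases hb : r.testBit t <;> cases hb' : r.testBit (t-1) <;>
      simp [h1, h2, h3, h4, hb, hb'] <;> omega

lemma mem_Bset_fst {k ℓ j : ℕ} {pr : ℕ × ℕ} (h : pr ∈ Bset k ℓ j) : pr.1 = ℓ := by
  unfold Bset at h
  split at h
  · simp only [Finset.mem_image] at h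
    obtain ⟨x, -, hx⟩ := h
    rw [← hx]
  · simp only [Finset.mem_singleton] at h
    rw [h]

lemma zmod2_cases (x : ZMod 2) : x = 0 ∨ x = 1 := by revert x; decide

/-- Recovery from the loss of two information nodes: the information array is determined
by the `k - 2` surviving information columns together with both parity nodes. -/
theorem recovery_two_info_nodes
    (k : ℕ) (hk : 3 ≤ k) (hodd : Odd k)
    (j₀ j₁ : ℕ) (hj₀ : j₀ < k) (hj₁ : j₁ < k) (hne : j₀ ≠ j₁)
    (a a' : ℕ → ℕ → ZMod 2)
    (hinfo : ∀ i' < 2 ^ (k - 1), ∀ j' < k, j' ≠ j₀ → j' ≠ j₁ → a i' j' = a' i' j')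
    (hhor : ∀ i < 2 ^ (k - 1), hpar k a i = hpar k a' i)
    (hbut : ∀ i < 2 ^ (k - 1), bpar k a i = bpar k a' i) :
    ∀ i < 2 ^ (k - 1), ∀ j < k, a i j = a' i j := by
  obtain ⟨m, hm⟩ := hodd
  have hm2 : k / 2 = m := by omega
  have hm1 : 1 ≤ m := by omega
  -- the difference array restricted to the two lost columns
  set d : ℕ → ℕ → ZMod 2 := fun i j => a i j - a' i j with hd
  set e : ℕ → ZMod 2 := fun i => a i j₀ - a' i j₀ with he
  have hd0 : ∀ i < 2 ^ (k - 1), ∀ j < k, j ≠ j₀ → j ≠ j₁ → d i j = 0 := by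
    intro i hi j hj h0 h1
    simp only [hd, sub_eq_zero]
    exact hinfo i hi j hj h0 h1
  have hdj0 : ∀ i, d i j₀ = e i := fun i => rfl
  -- horizontal parity: the two unknowns in a row are equal
  have hd1 : ∀ i < 2 ^ (k - 1), d i j₁ = e i := by
    intro i hi
    have hsum0 : ∑ j ∈ Finset.range k, d i j = 0 := by
      simp only [hd]
      rw [Finset.sum_sub_distrib, sub_eq_zero]
      exact hhor i hi
    have hterm : ∀ j ∈ Finset.range k, d i j =
        (if j = j₀ then d i j₀ else 0) + (if j = j₁ then d i j₁ else 0) := by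
      intro j hj
      rw [Finset.mem_range] at hj
      by_cases h0 : j = j₀
      · subst h0; simp [hne]
      · by_cases h1 : j = j₁
        · rw [if_neg h0, if_pos h1, h1, zero_add]
        · simp [h0, h1, hd0 i hi j hj h0 h1]
    rw [Finset.sum_congr rfl hterm, Finset.sum_add_distrib,
      Finset.sum_ite_eq' _ j₀ (fun _ => d i j₀), Finset.sum_ite_eq' _ j₁ (fun _ => d i j₁),
      if_pos (Finset.mem_range.mpr hj₀), if_pos (Finset.mem_range.mpr hj₁)] at hsum0
    have h2 := eq_neg_of_add_eq_zero_right hsum0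
    rw [CharTwo.neg_eq] at h2
    rw [h2]
  -- choose the ordered pair (p, q) with cyclic distance δ ∈ [1, m]
  obtain ⟨p, q, δ, hp, hq, hppq, hset, hδ1, hδm, hcase⟩ :
      ∃ p q δ, p < k ∧ q < k ∧ p ≠ q ∧ ((p = j₀ ∧ q = j₁) ∨ (p = j₁ ∧ q = j₀)) ∧
        1 ≤ δ ∧ δ ≤ m ∧ (q = p + δ ∨ q + k = p + δ) := by
    rcases Nat.lt_or_ge j₀ j₁ with h | h
    · by_cases hle : j₁ - j₀ ≤ m
      · exact ⟨j₀, j₁, j₁ - j₀, hj₀, hj₁, hne, Or.inl ⟨rfl, rfl⟩, by omega, hle,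
          Or.inl (by omega)⟩
      · exact ⟨j₁, j₀, k - (j₁ - j₀), hj₁, hj₀, fun h' => hne h'.symm, Or.inr ⟨rfl, rfl⟩,
          by omega, by omega, Or.inr (by omega)⟩
    · have h' : j₁ < j₀ := by omega
      by_cases hle : j₀ - j₁ ≤ m
      · exact ⟨j₁, j₀, j₀ - j₁, hj₁, hj₀, fun h'' => hne h''.symm, Or.inr ⟨rfl, rfl⟩,
          by omega, hle, Or.inl (by omega)⟩
      · exact ⟨j₀, j₁, k - (j₀ - j₁), hj₀, hj₁, hne, Or.inl ⟨rfl, rfl⟩,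
          by omega, by omega, Or.inr (by omega)⟩
  -- basic integer mod-k computations
  have hqp : ((q : ℤ) - p) % k = δ := by
    rcases hcase with h | h
    · have h2 : ((q : ℤ) - p) = δ := by omega
      rw [h2]; exact Int.emod_eq_of_lt (by omega) (by omega)
    · have h2 : ((q : ℤ) - p) = δ + (k : ℤ) * (-1) := by omega
      rw [h2, Int.add_mul_emod_self_left]
      exact Int.emod_eq_of_lt (by omega) (by omega)
  have hpq : ((p : ℤ) - q) % k = (k : ℤ) - δ := by
    rcases hcase with h | h
    · have h2 : ((p : ℤ) - q) = ((k : ℤ) - δ) + (k : ℤ) * (-1) := by omega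
      rw [h2, Int.add_mul_emod_self_left]
      exact Int.emod_eq_of_lt (by omega) (by omega)
    · have h2 : ((p : ℤ) - q) = (k : ℤ) - δ := by omega
      rw [h2]; exact Int.emod_eq_of_lt (by omega) (by omega)
  -- the butterfly coefficient pattern
  set cval : ℕ → ZMod 2 := fun j =>
    (if ((j : ℤ) - (j₀ : ℤ)) % (k : ℤ) ≤ ((k / 2 : ℕ) : ℤ) then 1 else 0) +
    (if ((j : ℤ) - (j₁ : ℤ)) % (k : ℤ) ≤ ((k / 2 : ℕ) : ℤ) then 1 else 0) with hcval
  have hself : ∀ x : ℕ, ((x : ℤ) - (x : ℤ)) % k = 0 := by intro x; simp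
  have hcvalp : cval p = 1 := by
    simp only [hcval]
    rcases hset with ⟨h0, h1⟩ | ⟨h0, h1⟩
    · rw [← h0, ← h1, hself, hpq, if_pos (by omega), if_neg (by omega), add_zero]
    · rw [← h0, ← h1, hself, hpq, if_neg (by omega), if_pos (by omega), zero_add]
  have hcvalq : cval q = 0 := by
    simp only [hcval]
    rcases hset with ⟨h0, h1⟩ | ⟨h0, h1⟩
    · rw [← h0, ← h1, hself, hqp, if_pos (by omega), if_pos (by omega)]
      decide
    · rw [← h0, ← h1, hself, hqp, if_pos (by omega), if_pos (by omega)]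
      decide
  -- bounds
  have hv : ∀ j, j < k → 2 ^ j - 1 < 2 ^ (k - 1) := by
    intro j hj
    have h1 : 2 ^ j ≤ 2 ^ (k - 1) := Nat.pow_le_pow_right (by norm_num) (by omega)
    have h2 : 1 ≤ 2 ^ j := Nat.one_le_two_pow
    omega
  have hx2 : ∀ r j, r < 2 ^ (k - 1) → j < k → r ^^^ (2 ^ p - 1) ^^^ (2 ^ j - 1) < 2 ^ (k - 1) :=
    fun r j hr hj => Nat.xor_lt_two_pow (Nat.xor_lt_two_pow hr (hv p hp)) (hv j hj)
  -- the value of the sum of `d` over a single `Bset`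
  have hBsum : ∀ ℓ, ℓ < 2 ^ (k - 1) → ∀ j, j < k →
      ∑ pr ∈ Bset k ℓ j, d pr.1 pr.2 =
        if dark ℓ j then cval j * e ℓ else (if j = j₀ ∨ j = j₁ then e ℓ else 0) := by
    intro ℓ hℓ j hj
    by_cases hdk : dark ℓ j
    · rw [if_pos hdk]
      simp only [Bset, if_pos hdk]
      rw [Finset.sum_image (by intro x _ y _ hxy; simpa using hxy)]
      have hterm : ∀ j' ∈ (Finset.range k).filter
          (fun j' : ℕ => ((j : ℤ) - (j' : ℤ)) % (k : ℤ) ≤ ((k / 2 : ℕ) : ℤ)),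
          d ℓ j' = (if j' = j₀ then e ℓ else 0) + (if j' = j₁ then e ℓ else 0) := by
        intro j' hj'
        rw [Finset.mem_filter, Finset.mem_range] at hj'
        by_cases h0 : j' = j₀
        · rw [if_pos h0, if_neg (by rw [h0]; exact hne), h0, add_zero]
        · by_cases h1 : j' = j₁
          · rw [if_neg h0, if_pos h1, h1, zero_add]
            exact hd1 ℓ hℓ
          · rw [if_neg h0, if_neg h1, add_zero]
            exact hd0 ℓ hℓ j' hj'.1 h0 h1
      rw [Finset.sum_congr rfl hterm, Finset.sum_add_distrib,
        Finset.sum_ite_eq' _ j₀ (fun _ => e ℓ), Finset.sum_ite_eq' _ j₁ (fun _ => e ℓ)]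
      simp only [Finset.mem_filter, Finset.mem_range, hj₀, hj₁, true_and, hcval]
      split_ifs <;> ring
    · rw [if_neg hdk]
      simp only [Bset, if_neg hdk]
      rw [Finset.sum_singleton]
      by_cases h0 : j = j₀
      · rw [if_pos (Or.inl h0), h0]
      · by_cases h1 : j = j₁
        · rw [if_pos (Or.inr h1), h1]
          exact hd1 ℓ hℓ
        · rw [if_neg (by rintro (h | h) <;> [exact h0 h; exact h1 h])]
          exact hd0 ℓ hℓ j hj h0 h1
  -- butterfly parity: the sum over each B-line vanishes
  have hBline : ∀ i, i < 2 ^ (k - 1) →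
      ∑ j ∈ Finset.range k, ∑ pr ∈ Bset k (ell i j) j, d pr.1 pr.2 = 0 := by
    intro i hi
    have hdisj : Set.PairwiseDisjoint ↑(Finset.range k) (fun j => Bset k (ell i j) j) := by
      intro x _ y _ hxy
      refine Finset.disjoint_left.mpr ?_
      intro pr hx hy
      have h1 := mem_Bset_fst hx
      have h2 := mem_Bset_fst hy
      apply hxy
      have h3 : ell i x = ell i y := by rw [← h1, h2]
      unfold ell at h3
      have h4 : 2 ^ x - 1 = 2 ^ y - 1 := by
        have := congrArg (fun z => i ^^^ z) h3
        simpa [Nat.xor_xor_cancel_left] using this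
      have h5 : (2:ℕ) ^ x = 2 ^ y := by
        have hx1 : 1 ≤ (2:ℕ) ^ x := Nat.one_le_two_pow
        have hy1 : 1 ≤ (2:ℕ) ^ y := Nat.one_le_two_pow
        omega
      exact Nat.pow_right_injective (by norm_num) h5
    rw [← Finset.sum_biUnion hdisj]
    have hb := hbut i hi
    unfold bpar Bline at hb
    simp only [hd]
    rw [Finset.sum_sub_distrib, sub_eq_zero]
    exact hb
  -- the main recursion identity
  have main_id : ∀ r, r < 2 ^ (k - 1) → e r = ∑ j ∈ (Finset.range k).erase p,
      (if dark r j then (if j = q then e (r ^^^ (2 ^ p - 1) ^^^ (2 ^ j - 1)) else 0)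
       else cval j * e (r ^^^ (2 ^ p - 1) ^^^ (2 ^ j - 1))) := by
    intro r hr
    have hi : r ^^^ (2 ^ p - 1) < 2 ^ (k - 1) := Nat.xor_lt_two_pow hr (hv p hp)
    have h0 := hBline (r ^^^ (2 ^ p - 1)) hi
    rw [← Finset.add_sum_erase _ _ (Finset.mem_range.mpr hp)] at h0
    have hellp : ell (r ^^^ (2 ^ p - 1)) p = r := Nat.xor_xor_cancel_right _ _
    have htp : ∑ pr ∈ Bset k (ell (r ^^^ (2 ^ p - 1)) p) p, d pr.1 pr.2 = e r := by
      rw [hellp, hBsum r hr p hp]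
      by_cases hdp : dark r p
      · rw [if_pos hdp, hcvalp, one_mul]
      · rw [if_neg hdp, if_pos]
        rcases hset with ⟨h1, _⟩ | ⟨h1, _⟩
        · exact Or.inl h1
        · exact Or.inr h1
    rw [htp] at h0
    have hrest : ∀ j ∈ (Finset.range k).erase p,
        ∑ pr ∈ Bset k (ell (r ^^^ (2 ^ p - 1)) j) j, d pr.1 pr.2 =
        (if dark r j then (if j = q then e (r ^^^ (2 ^ p - 1) ^^^ (2 ^ j - 1)) else 0)
         else cval j * e (r ^^^ (2 ^ p - 1) ^^^ (2 ^ j - 1))) := by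
      intro j hj
      rw [Finset.mem_erase, Finset.mem_range] at hj
      obtain ⟨hjp, hjk⟩ := hj
      have hell : ell (r ^^^ (2 ^ p - 1)) j = r ^^^ (2 ^ p - 1) ^^^ (2 ^ j - 1) := rfl
      rw [hell, hBsum _ (hx2 r j hr hjk) j hjk]
      have hdt := dark_toggle r p j j
      by_cases hdr : dark r j
      · have hnd : ¬ dark (r ^^^ (2 ^ p - 1) ^^^ (2 ^ j - 1)) j := by
          rw [hdt]
          simp [hdr, fun h : j = p => hjp h]
        rw [if_neg hnd, if_pos hdr]
        by_cases hjq : j = q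
        · rw [if_pos hjq, if_pos]
          rcases hset with ⟨_, h1⟩ | ⟨_, h1⟩
          · exact Or.inr (hjq.trans h1)
          · exact Or.inl (hjq.trans h1)
        · rw [if_neg hjq, if_neg]
          rintro (h | h) <;> rcases hset with ⟨h1, h2⟩ | ⟨h1, h2⟩
          · exact hjp (h.trans h1.symm)
          · exact hjq (h.trans h2.symm)
          · exact hjq (h.trans h2.symm)
          · exact hjp (h.trans h1.symm)
      · have hnd : dark (r ^^^ (2 ^ p - 1) ^^^ (2 ^ j - 1)) j := by
          rw [hdt]
          simp [hdr, fun h : j = p => hjp h]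
        rw [if_pos hnd, if_neg hdr]
    rw [Finset.sum_congr rfl hrest] at h0
    have h2 := eq_neg_of_add_eq_zero_left h0
    rwa [CharTwo.neg_eq] at h2
  -- the decreasing measure
  set ρ : ℕ → ℕ := fun r =>
    ((Finset.range k).filter (fun j => j ≠ p ∧ cval j = 1 ∧ ¬ dark r j)).card +
      (if dark r q then 1 else 0) with hρ
  have hqone : ¬ cval q = 1 := by rw [hcvalq]; decide
  -- measure decrease, case of the `q`-move
  have hdec1 : ∀ r, dark r q → ρ (r ^^^ (2 ^ p - 1) ^^^ (2 ^ q - 1)) < ρ r := by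
    intro r hdr
    have hfil : (Finset.range k).filter
          (fun j => j ≠ p ∧ cval j = 1 ∧ ¬ dark (r ^^^ (2 ^ p - 1) ^^^ (2 ^ q - 1)) j) =
        (Finset.range k).filter (fun j => j ≠ p ∧ cval j = 1 ∧ ¬ dark r j) := by
      apply Finset.filter_congr
      intro x _
      by_cases hxp : x = p
      · simp [hxp]
      · by_cases hxc : cval x = 1
        · have hxq : x ≠ q := fun h => hqone (h ▸ hxc)
          have := dark_toggle r p q x
          simp only [hxp, hxq, iff_false, iff_self, iff_true] at this
          rw [this]
        · simp [hxc]
    have hq2 : ¬ dark (r ^^^ (2 ^ p - 1) ^^^ (2 ^ q - 1)) q := by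
      rw [dark_toggle r p q q]
      simp [hdr, Ne.symm hppq]
    simp only [hρ]
    rw [hfil, if_neg hq2, if_pos hdr]
    omega
  -- measure decrease, case of a window move
  have hdec2 : ∀ r j, j < k → j ≠ p → cval j = 1 → ¬ dark r j →
      ρ (r ^^^ (2 ^ p - 1) ^^^ (2 ^ j - 1)) < ρ r := by
    intro r j hjk hjp hjc hdr
    have hjq : j ≠ q := fun h => hqone (h ▸ hjc)
    have hmem : j ∈ (Finset.range k).filter (fun j' => j' ≠ p ∧ cval j' = 1 ∧ ¬ dark r j') := by
      rw [Finset.mem_filter, Finset.mem_range]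
      exact ⟨hjk, hjp, hjc, hdr⟩
    have hfil : (Finset.range k).filter
          (fun j' => j' ≠ p ∧ cval j' = 1 ∧ ¬ dark (r ^^^ (2 ^ p - 1) ^^^ (2 ^ j - 1)) j') =
        ((Finset.range k).filter (fun j' => j' ≠ p ∧ cval j' = 1 ∧ ¬ dark r j')).erase j := by
      ext x
      rw [Finset.mem_erase, Finset.mem_filter, Finset.mem_filter]
      constructor
      · rintro ⟨hxk, hxp, hxc, hxd⟩
        by_cases hxj : x = j
        · exfalso
          apply hxd
          subst hxj
          rw [dark_toggle r p x x]
          simp [hdr, fun h : x = p => hjp h]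
        · have := dark_toggle r p j x
          simp only [hxp, hxj, iff_false, iff_self, iff_true] at this
          rw [this] at hxd
          exact ⟨hxj, hxk, hxp, hxc, hxd⟩
      · rintro ⟨hxj, hxk, hxp, hxc, hxd⟩
        have := dark_toggle r p j x
        simp only [hxp, hxj, iff_false, iff_self, iff_true] at this
        rw [← this] at hxd
        exact ⟨hxk, hxp, hxc, hxd⟩
    have hq2 : dark (r ^^^ (2 ^ p - 1) ^^^ (2 ^ j - 1)) q ↔ dark r q := by
      rw [dark_toggle r p j q]
      simp [Ne.symm hppq, Ne.symm hjq]
    have hcard : (((Finset.range k).filter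
        (fun j' => j' ≠ p ∧ cval j' = 1 ∧ ¬ dark r j')).erase j).card =
        ((Finset.range k).filter (fun j' => j' ≠ p ∧ cval j' = 1 ∧ ¬ dark r j')).card - 1 :=
      Finset.card_erase_of_mem hmem
    have hpos : 1 ≤ ((Finset.range k).filter
        (fun j' => j' ≠ p ∧ cval j' = 1 ∧ ¬ dark r j')).card :=
      Finset.card_pos.mpr ⟨j, hmem⟩
    simp only [hρ]
    rw [hfil, hcard]
    by_cases hdq : dark r q
    · rw [if_pos hdq, if_pos (hq2.mpr hdq)]
      omega
    · rw [if_neg hdq, if_neg (fun h => hdq (hq2.mp h))]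
      omega
  -- the induction
  have key : ∀ n r, r < 2 ^ (k - 1) → ρ r < n → e r = 0 := by
    intro n
    induction n with
    | zero => intro r _ h; omega
    | succ n ih =>
      intro r hr hρr
      rw [main_id r hr]
      apply Finset.sum_eq_zero
      intro j hj
      rw [Finset.mem_erase, Finset.mem_range] at hj
      obtain ⟨hjp, hjk⟩ := hj
      by_cases hdr : dark r j
      · rw [if_pos hdr]
        by_cases hjq : j = q
        · rw [if_pos hjq]
          subst hjq
          exact ih _ (hx2 r j hr hjk) (by have := hdec1 r hdr; omega)
        · rw [if_neg hjq]
      · rw [if_neg hdr]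
        by_cases hc : cval j = 1
        · rw [hc, one_mul]
          exact ih _ (hx2 r j hr hjk) (by have := hdec2 r j hjk hjp hc hdr; omega)
        · rcases zmod2_cases (cval j) with h | h
          · rw [h, zero_mul]
          · exact absurd h hc
  have hzero : ∀ r, r < 2 ^ (k - 1) → e r = 0 := fun r hr => key (ρ r + 1) r hr (by omega)
  -- conclusion
  intro i hi j hj
  by_cases h0 : j = j₀
  · subst h0
    exact sub_eq_zero.mp (hzero i hi)
  · by_cases h1 : j = j₁
    · subst h1
      have h2 := hd1 i hi
      rw [hzero i hi] at h2
      exact sub_eq_zero.mp h2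
    · exact hinfo i hi j hj h0 h1
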